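/- Let D_1,…,D_7 be a basis of the traceless real diagonal 8×8 matrices, and consider charges of the Ansatz form q_{12} = √2·r·cos(φ/4), p^{12} = √2·r·sin(φ/4), all other q_{mn}, p^{mn} zero, with r ≠ 0. Then attractor equation I, namely Σ_{m<n} (D_α^m + D_α^n) q_{mn} p^{mn} = 0 for all α = 1,…,7, is equivalent to the conditions (D_α^1 + D_α^2)·sin(φ/2) = 0 for all α, and hence (since some D_α^1 + D_α^2 ≠ 0) is equivalent to sin(φ/2) = 0, i.e. to φ = 2nπ for some n ∈ ℤ. Consequently every solution is non-dyonic: either purely electric (p^{12} = 0, when n is even) or purely magnetic (q_{12} = 0, when n is odd). -/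

import Mathlib

open Matrix

/-- Index set for the 28-dimensional space `Λ²(ℝ⁸)`: ordered pairs `i < j` in `Fin 8`. -/
abbrev PairIdx : Type := {p : Fin 8 × Fin 8 // p.1 < p.2}

/-- Index set for the 56-dimensional space `W = Λ²V ⊕ Λ²(V*)`. -/
abbrev WIdx : Type := PairIdx ⊕ PairIdx

/-- The action of an `8×8` matrix `M` on `Λ²V`, `M(eᵢ ∧ eⱼ) = (M eᵢ) ∧ eⱼ + eᵢ ∧ (M eⱼ)`,
written as a `28×28` matrix in the basis `{e_{ij}}_{i<j}`. -/
def lam2 (M : Matrix (Fin 8) (Fin 8) ℝ) : Matrix PairIdx PairIdx ℝ :=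
  Matrix.of fun a b =>
    M a.1.1 b.1.1 * (if a.1.2 = b.1.2 then 1 else 0)
    - M a.1.2 b.1.1 * (if a.1.1 = b.1.2 then 1 else 0)
    + M a.1.2 b.1.2 * (if a.1.1 = b.1.1 then 1 else 0)
    - M a.1.1 b.1.2 * (if a.1.2 = b.1.1 then 1 else 0)

/-- The `56×56` extension of an `8×8` matrix `M` to `W = Λ²V ⊕ Λ²(V*)`:
it acts on `Λ²V` as `lam2 M` and on `Λ²(V*)` by minus the transpose of this action. -/
def extW (M : Matrix (Fin 8) (Fin 8) ℝ) : Matrix WIdx WIdx ℝ :=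
  Matrix.fromBlocks (lam2 M) 0 0 (-(lam2 M)ᵀ)

/-- The antisymmetric `8×8` matrix `A_{kl} eᵢ = δ_{li} e_k − δ_{ki} e_l`. -/
def Amat (k l : Fin 8) : Matrix (Fin 8) (Fin 8) ℝ :=
  Matrix.of fun a b => (if a = k ∧ b = l then 1 else 0) - (if a = l ∧ b = k then 1 else 0)

/-- The symmetric `8×8` matrix `S_{kl} eᵢ = δ_{li} e_k + δ_{ki} e_l`. -/
def Smat (k l : Fin 8) : Matrix (Fin 8) (Fin 8) ℝ :=
  Matrix.of fun a b => (if a = k ∧ b = l then 1 else 0) + (if a = l ∧ b = k then 1 else 0)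

/-- `J⁺_{kl} = (S_{kl} + A_{kl})/√2` as a `56×56` matrix. -/
noncomputable def Jplus (k l : Fin 8) : Matrix WIdx WIdx ℝ :=
  (Real.sqrt 2)⁻¹ • (extW (Smat k l) + extW (Amat k l))

/-- `J⁻_{kl} = (S_{kl} − A_{kl})/√2` as a `56×56` matrix. -/
noncomputable def Jminus (k l : Fin 8) : Matrix WIdx WIdx ℝ :=
  (Real.sqrt 2)⁻¹ • (extW (Smat k l) - extW (Amat k l))

/-- `h_D` for a diagonal matrix `D = diag d`: acts by `(dᵢ + dⱼ)` on `e_{ij}` and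
`−(dᵢ + dⱼ)` on `ε^{ij}`. -/
def hD (d : Fin 8 → ℝ) : Matrix WIdx WIdx ℝ := extW (Matrix.diagonal d)

/-- Tetra-indices: strictly increasing 4-tuples in `{1,…,8}`. -/
abbrev TetraIdx : Type := {f : Fin 4 → Fin 8 // StrictMono f}

/-- The 8-index Levi-Civita symbol. -/
noncomputable def levi (f : Fin 8 → Fin 8) : ℝ :=
  if h : Function.Bijective f then ((Equiv.Perm.sign (Equiv.ofBijective f h) : ℤ) : ℝ) else 0

/-- The rank-4 generalized Kronecker delta `δ^{j₁j₂j₃j₄}_{i₁i₂i₃i₄}`. -/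
noncomputable def gdelta (i j : Fin 4 → Fin 8) : ℝ :=
  ∑ σ : Equiv.Perm (Fin 4),
    ((Equiv.Perm.sign σ : ℤ) : ℝ) * ∏ t : Fin 4, (if j t = i (σ t) then 1 else 0)

/-- `ε_{i₁i₂i₃i₄ a₁a₂ b₁b₂}` for a tetra-index `I` and pair indices `a`, `b`. -/
noncomputable def leviI (I : TetraIdx) (a b : PairIdx) : ℝ :=
  levi ![I.val 0, I.val 1, I.val 2, I.val 3, a.1.1, a.1.2, b.1.1, b.1.2]

/-- `δ^{a₁ a₂ b₁ b₂}_{i₁i₂i₃i₄}` for a tetra-index `I` and pair indices `a`, `b`. -/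
noncomputable def gdeltaI (I : TetraIdx) (a b : PairIdx) : ℝ :=
  gdelta I.val ![a.1.1, a.1.2, b.1.1, b.1.2]

/-- The `56×56` matrix `λ_I`: block off-diagonal w.r.t. `W = Λ²V ⊕ Λ²(V*)`, with
`λ_I(e_{j₁j₂}) = ∑_{k₁<k₂} ε_{I j₁j₂k₁k₂} ε^{k₁k₂}` and
`λ_I(ε^{j₁j₂}) = ∑_{k₁<k₂} δ^{j₁j₂k₁k₂}_I e_{k₁k₂}`. -/
noncomputable def lamT (I : TetraIdx) : Matrix WIdx WIdx ℝ :=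
  Matrix.fromBlocks 0 (Matrix.of fun K J => gdeltaI I J K) (Matrix.of fun K J => leviI I J K) 0

/-- The symplectic metric `Ω`. -/
def OmegaW : Matrix WIdx WIdx ℝ :=
  Matrix.fromBlocks 0 (-1) 1 0

/-- The pair index `(1,2)` (i.e. `(0,1)` in 0-based indexing). -/
def pair01 : PairIdx := ⟨(0, 1), by decide⟩

/-- For a basis `D₁,…,D₇` of the traceless real diagonal `8×8` matrices
and charges of the Ansatz form `q₁₂ = √2·r·cos(φ/4)`, `p¹² = √2·r·sin(φ/4)`, all other
charges zero, with `r ≠ 0`: attractor equation I,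
`Σ_{m<n} (D_α^m + D_α^n) q_{mn} p^{mn} = 0` for all `α`, is equivalent to
`(D_α¹ + D_α²)·sin(φ/2) = 0` for all `α`, and hence equivalent to `sin(φ/2) = 0`, i.e. to
`φ = 2nπ` for some `n ∈ ℤ`. Consequently every solution is non-dyonic: purely electric
(`p¹² = 0`) or purely magnetic (`q¹² = 0`). -/
lemma exists_ne_zero (D : Fin 7 → Fin 8 → ℝ)
    (htr : ∀ α, ∑ i, D α i = 0) (hind : LinearIndependent ℝ D) :
    ∃ α, D α 0 + D α 1 ≠ 0 := by
  by_contra h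
  push_neg at h
  -- sum functional
  set s : (Fin 8 → ℝ) →ₗ[ℝ] ℝ :=
    { toFun := fun d => ∑ i, d i
      map_add' := by intro x y; simp [Finset.sum_add_distrib]
      map_smul' := by intro c x; simp [Finset.mul_sum] }
  set T : Submodule ℝ (Fin 8 → ℝ) := LinearMap.ker s with hT
  have hsurj : Function.Surjective s := by
    intro c
    refine ⟨fun i => if i = 0 then c else 0, ?_⟩
    simp [s, Fin.sum_univ_eight]
  have hrange : LinearMap.range s = ⊤ := LinearMap.range_eq_top.mpr hsurj
  have hfr : Module.finrank ℝ T = 7 := by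
    have h2 := LinearMap.finrank_range_add_finrank_ker s
    rw [hrange, ← hT, finrank_top, Module.finrank_self,
      Module.finrank_fintype_fun_eq_card, Fintype.card_fin] at h2
    omega
  set D' : Fin 7 → T := fun α => ⟨D α, by simpa [T, s] using htr α⟩ with hD'
  have hind' : LinearIndependent ℝ D' := by
    apply LinearIndependent.of_comp T.subtype
    convert hind
    rfl
  have hspan : Submodule.span ℝ (Set.range D') = ⊤ :=
    hind'.span_eq_top_of_card_eq_finrank (by simp [hfr])
  have hzero : ∀ w ∈ Submodule.span ℝ (Set.range D), w 0 + w 1 = 0 := by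
    intro w hw
    induction hw using Submodule.span_induction with
    | mem x hx => obtain ⟨α, rfl⟩ := hx; exact h α
    | zero => simp
    | add x y _ _ hx hy => simp only [Pi.add_apply]; linarith
    | smul c x _ hx => simp only [Pi.smul_apply, smul_eq_mul]; rw [← mul_add, hx, mul_zero]
  set v : Fin 8 → ℝ := fun i => if i = 0 then 1 else if i = 2 then -1 else 0 with hv
  have hvT : v ∈ T := by simp [hT, s, hv, Fin.sum_univ_eight]
  have hmem : v ∈ Submodule.span ℝ (Set.range D) := by
    have : (⟨v, hvT⟩ : T) ∈ Submodule.span ℝ (Set.range D') := hspan ▸ Submodule.mem_top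
    have := Submodule.mem_map_of_mem (f := T.subtype) this
    rw [Submodule.map_span] at this
    have heq : T.subtype '' Set.range D' = Set.range D := by
      rw [← Set.range_comp]; rfl
    rwa [heq] at this
  have := hzero v hmem
  simp [hv] at this

theorem attractor_eq_I_nondyonic (D : Fin 7 → Fin 8 → ℝ)
    (htr : ∀ α, ∑ i, D α i = 0) (hind : LinearIndependent ℝ D)
    (r φ : ℝ) (hr : r ≠ 0) (q p : PairIdx → ℝ)
    (hq12 : q pair01 = Real.sqrt 2 * r * Real.cos (φ / 4))
    (hp12 : p pair01 = Real.sqrt 2 * r * Real.sin (φ / 4))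
    (hq0 : ∀ a : PairIdx, a ≠ pair01 → q a = 0)
    (hp0 : ∀ a : PairIdx, a ≠ pair01 → p a = 0) :
    ((∀ α : Fin 7, ∑ a : PairIdx, (D α a.1.1 + D α a.1.2) * q a * p a = 0) ↔
      (∀ α : Fin 7, (D α 0 + D α 1) * Real.sin (φ / 2) = 0)) ∧
    ((∀ α : Fin 7, (D α 0 + D α 1) * Real.sin (φ / 2) = 0) ↔ Real.sin (φ / 2) = 0) ∧
    (Real.sin (φ / 2) = 0 ↔ ∃ n : ℤ, φ = 2 * n * Real.pi) ∧
    ((∀ α : Fin 7, ∑ a : PairIdx, (D α a.1.1 + D α a.1.2) * q a * p a = 0) →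
      p pair01 = 0 ∨ q pair01 = 0) := by
  have hhalf : Real.sin (φ / 2) = 2 * Real.sin (φ / 4) * Real.cos (φ / 4) := by
    rw [← Real.sin_two_mul]; ring_nf
  have h2 : Real.sqrt 2 * Real.sqrt 2 = 2 := Real.mul_self_sqrt (by norm_num)
  have hqp : q pair01 * p pair01 = r ^ 2 * Real.sin (φ / 2) := by
    rw [hq12, hp12, hhalf]
    have h2' : Real.sqrt 2 ^ 2 = 2 := Real.sq_sqrt (by norm_num)
    ring_nf
    rw [h2']
    ring
  have hsum : ∀ α : Fin 7,
      ∑ a : PairIdx, (D α a.1.1 + D α a.1.2) * q a * p a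
        = (D α 0 + D α 1) * (r ^ 2 * Real.sin (φ / 2)) := by
    intro α
    rw [Fintype.sum_eq_single pair01 (fun x hx => by rw [hq0 x hx]; ring)]
    show (D α 0 + D α 1) * q pair01 * p pair01 = _
    rw [mul_assoc, hqp]
  have hr2 : r ^ 2 ≠ 0 := pow_ne_zero 2 hr
  have part1 : (∀ α : Fin 7, ∑ a : PairIdx, (D α a.1.1 + D α a.1.2) * q a * p a = 0) ↔
      (∀ α : Fin 7, (D α 0 + D α 1) * Real.sin (φ / 2) = 0) := by
    constructor <;> intro hA α <;> have := hA α
    · rw [hsum α] at this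
      rcases mul_eq_zero.mp this with h | h
      · rw [h, zero_mul]
      · rcases mul_eq_zero.mp h with h' | h'
        · exact absurd h' hr2
        · rw [h', mul_zero]
    · rw [hsum α, show (D α 0 + D α 1) * (r ^ 2 * Real.sin (φ / 2))
        = r ^ 2 * ((D α 0 + D α 1) * Real.sin (φ / 2)) by ring, this, mul_zero]
  have part2 : (∀ α : Fin 7, (D α 0 + D α 1) * Real.sin (φ / 2) = 0) ↔
      Real.sin (φ / 2) = 0 := by
    constructor
    · intro hA
      by_contra hs
      obtain ⟨α, hα⟩ := exists_ne_zero D htr hind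
      exact hα ((mul_eq_zero.mp (hA α)).resolve_right hs)
    · intro hs α; rw [hs, mul_zero]
  have part3 : Real.sin (φ / 2) = 0 ↔ ∃ n : ℤ, φ = 2 * n * Real.pi := by
    rw [Real.sin_eq_zero_iff]
    constructor <;> rintro ⟨n, hn⟩ <;> exact ⟨n, by linarith⟩
  refine ⟨part1, part2, part3, fun hA => ?_⟩
  have hs : Real.sin (φ / 2) = 0 := part2.mp (part1.mp hA)
  rw [hhalf] at hs
  rcases mul_eq_zero.mp hs with h | h
  · rcases mul_eq_zero.mp h with h' | h'
    · norm_num at h'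
    · left; rw [hp12, h', mul_zero]
  · right; rw [hq12, h, mul_zero]
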